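/- For the chain graph (1D total variation) with penalty Ω(w) = Σ_{i=1}^{k−1}|w_{i+1} − w_i|, if λ ≥ (max_i x_i − min_i x_i)·k/2 is sufficiently large, then prox_{λΩ}(x) is the constant vector with all entries equal to the mean of x. In particular, for any λ ≥ Σ_i |x_i − mean(x)|, the output is the constant mean vector. -/

import Mathlib

/-- Complete fusion of the 1D total variation prox for large `λ`: if
`λ ≥ ∑_i |x_i − mean(x)|`, then `prox_{λΩ}(x)` is the constant vector with all
entries equal to the mean of `x`, where `Ω(w) = ∑_{i=1}^{k-1} |w_{i+1} − w_i|`. -/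
theorem tv1d_prox_full_fusion {k : ℕ} (x : Fin (k + 1) → ℝ) (lam : ℝ)
    (hlam : (∑ i, |x i - (∑ j, x j) / (k + 1)|) ≤ lam) (w : Fin (k + 1) → ℝ)
    (hw : ∀ u : Fin (k + 1) → ℝ,
      (1 / 2) * ∑ i, (w i - x i) ^ 2
          + lam * ∑ i : Fin k, |w i.succ - w i.castSucc| ≤
      (1 / 2) * ∑ i, (u i - x i) ^ 2
          + lam * ∑ i : Fin k, |u i.succ - u i.castSucc|) :
    ∀ i, w i = (∑ j, x j) / (k + 1) := by
  set m : ℝ := (∑ j, x j) / (k + 1) with hm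
  have hk1 : ((k : ℝ) + 1) ≠ 0 := by positivity
  -- deviations sum to zero
  have hsumc : (∑ i, (x i - m)) = 0 := by
    rw [Finset.sum_sub_distrib, Finset.sum_const, Finset.card_univ, Fintype.card_fin]
    rw [hm]
    rw [nsmul_eq_mul]; push_cast; rw [mul_div_assoc', mul_div_cancel_left₀ _ hk1, sub_self]
  -- key: the constant mean vector has objective ≤ objective of any v
  have key : ∀ v : Fin (k + 1) → ℝ,
      (1 / 2) * ∑ i, (m - x i) ^ 2 ≤
      (1 / 2) * ∑ i, (v i - x i) ^ 2
        + lam * ∑ i : Fin k, |v i.succ - v i.castSucc| := by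
    intro v
    set T : ℝ := ∑ i : Fin k, |v i.succ - v i.castSucc| with hT
    have hT0 : 0 ≤ T := Finset.sum_nonneg fun _ _ => abs_nonneg _
    -- range bound: |v i - v 0| ≤ T
    open Fin.NatCast in
    have hrange : ∀ i : Fin (k + 1), |v i - v 0| ≤ T := by
      intro i
      have hfi : ∀ n : Fin (k + 1), v ((n.val : ℕ) : Fin (k + 1)) = v n := by
        intro n; rw [Fin.cast_val_eq_self]
      set f : ℕ → ℝ := fun n => v (n : Fin (k + 1)) with hf
      have htel : f i.val - f 0 = ∑ j ∈ Finset.range i.val, (f (j + 1) - f j) :=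
        (Finset.sum_range_sub f i.val).symm
      have hv0 : f 0 = v 0 := by simp [hf]
      have hvi : f i.val = v i := hfi i
      have hterm : ∀ j : Fin k, f (j.val + 1) - f j.val = v j.succ - v j.castSucc := by
        intro j
        have h1 : ((j.val + 1 : ℕ) : Fin (k + 1)) = j.succ := by
          apply Fin.ext
          simp [Fin.val_cast_of_lt (Nat.succ_lt_succ j.isLt)]
        have h2 : ((j.val : ℕ) : Fin (k + 1)) = j.castSucc := by
          apply Fin.ext
          simp [Fin.val_cast_of_lt (Nat.lt_succ_of_lt j.isLt)]
        simp [hf, h1, h2]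
      have hTeq : T = ∑ j ∈ Finset.range k, |f (j + 1) - f j| := by
        rw [hT, ← Fin.sum_univ_eq_sum_range (fun j => |f (j + 1) - f j|) k]
        exact Finset.sum_congr rfl fun j _ => by rw [hterm j]
      calc |v i - v 0| = |f i.val - f 0| := by rw [hv0, hvi]
        _ = |∑ j ∈ Finset.range i.val, (f (j + 1) - f j)| := by rw [htel]
        _ ≤ ∑ j ∈ Finset.range i.val, |f (j + 1) - f j| :=
            Finset.abs_sum_le_sum_abs _ _
        _ ≤ ∑ j ∈ Finset.range k, |f (j + 1) - f j| := by
            apply Finset.sum_le_sum_of_subset_of_nonneg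
            · exact Finset.range_subset_range.mpr (Nat.lt_succ_iff.mp i.isLt)
            · intro _ _ _; exact abs_nonneg _
        _ = T := hTeq.symm
    -- bound the linear term
    have hlin : |∑ i, (x i - m) * (v i - v 0)| ≤ lam * T := by
      calc |∑ i, (x i - m) * (v i - v 0)|
          ≤ ∑ i, |(x i - m) * (v i - v 0)| := Finset.abs_sum_le_sum_abs _ _
        _ = ∑ i, |x i - m| * |v i - v 0| := by
            exact Finset.sum_congr rfl fun i _ => abs_mul _ _
        _ ≤ ∑ i, |x i - m| * T := by
            apply Finset.sum_le_sum
            intro i _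
            exact mul_le_mul_of_nonneg_left (hrange i) (abs_nonneg _)
        _ = (∑ i, |x i - m|) * T := by rw [← Finset.sum_mul]
        _ ≤ lam * T := mul_le_mul_of_nonneg_right hlam hT0
    have hshift : (∑ i, (x i - m) * (v i - m)) = ∑ i, (x i - m) * (v i - v 0) := by
      have : (∑ i, (x i - m) * (v i - m))
          = (∑ i, (x i - m) * (v i - v 0)) + (v 0 - m) * ∑ i, (x i - m) := by
        rw [Finset.mul_sum, ← Finset.sum_add_distrib]
        exact Finset.sum_congr rfl fun i _ => by ring
      rw [this, hsumc]; ring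
    -- pointwise convexity bound on the quadratic part
    have hquad : ∑ i, (m - x i) ^ 2 - 2 * ∑ i, (x i - m) * (v i - m)
        ≤ ∑ i, (v i - x i) ^ 2 := by
      rw [Finset.mul_sum, ← Finset.sum_sub_distrib]
      apply Finset.sum_le_sum
      intro i _
      nlinarith [sq_nonneg (v i - m)]
    have habs : (∑ i, (x i - m) * (v i - m)) ≤ lam * T := by
      rw [hshift]
      linarith [le_abs_self (∑ i, (x i - m) * (v i - v 0)), hlin]
    linarith
  -- w is a minimizer, and so is the constant mean vector; compare
  have hTw0 : (0:ℝ) ≤ ∑ i : Fin k, |w i.succ - w i.castSucc| :=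
    Finset.sum_nonneg fun _ _ => abs_nonneg _
  have h1 := hw (fun _ => m)
  simp only [sub_self, abs_zero, Finset.sum_const_zero, mul_zero, add_zero] at h1
  have h2 := key w
  -- midpoint vector
  set v : Fin (k + 1) → ℝ := fun i => (w i + m) / 2 with hv
  have h3 := hw v
  have hTv : (∑ i : Fin k, |v i.succ - v i.castSucc|)
      = (1 / 2) * ∑ i : Fin k, |w i.succ - w i.castSucc| := by
    rw [Finset.mul_sum]
    apply Finset.sum_congr rfl
    intro i _
    have : v i.succ - v i.castSucc = (w i.succ - w i.castSucc) / 2 := by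
      simp [hv]; ring
    rw [this, abs_div]
    simp
    ring
  have hQv : (∑ i, (v i - x i) ^ 2)
      = (1 / 2) * (∑ i, (w i - x i) ^ 2) + (1 / 2) * (∑ i, (m - x i) ^ 2)
        - ∑ i, ((w i - m) / 2) ^ 2 := by
    rw [Finset.mul_sum, Finset.mul_sum, ← Finset.sum_add_distrib, ← Finset.sum_sub_distrib]
    apply Finset.sum_congr rfl
    intro i _
    simp only [hv]
    ring
  have hsq : (∑ i, ((w i - m) / 2) ^ 2) ≤ 0 := by
    rw [hQv, hTv] at h3
    linarith
  have hsq0 : ∀ i ∈ Finset.univ, ((w i - m) / 2) ^ 2 = 0 := by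
    intro i _
    have h := Finset.sum_nonneg (fun i (_ : i ∈ Finset.univ) => sq_nonneg ((w i - m) / 2))
    have : (∑ i, ((w i - m) / 2) ^ 2) = 0 := le_antisymm hsq h
    exact (Finset.sum_eq_zero_iff_of_nonneg
      (fun i _ => sq_nonneg ((w i - m) / 2))).mp this i (Finset.mem_univ i)
  intro i
  have := hsq0 i (Finset.mem_univ i)
  have := pow_eq_zero_iff (n := 2) (by norm_num) |>.mp this
  have : w i - m = 0 := by
    field_simp at this
    linarith [this]
  linarith
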